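/- Let s be a nonzero real number, δ, λ ∈ ℂ, let β: ℝ → ℂ be differentiable with antiderivative Φ (Φ' = β), let z: ℝ → ℂ be differentiable with antiderivative Z (Z' = z), and define Λ(x) = exp(i·x/s + δ·Φ(x) - Z(x)). Then Λ satisfies the eigenvalue equation Λ''(x) - (2i/s)·(1 - i·s·β(x))·Λ'(x) - (2i/s)·(β(x) - (3is/2)·β(x)²)·Λ(x) = (2√2·λ/s)·Λ(x) for all x ∈ ℝ if and only if z satisfies the Riccati equation z'(x) = z(x)² - 2(δ-1)·β(x)·z(x) + (1 - 2√2·s·λ)/s² - (4i/s)·β(x) + (δ+1)(δ-3)·β(x)² + δ·β'(x) for all x ∈ ℝ. -/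

import Mathlib

open Complex

private lemma riccati_key (s : ℂ) (hs : s ≠ 0) (δ r lam b b' zz zz' : ℂ) :
    (((δ*b' - zz') + (I/s + δ*b - zz)*(I/s + δ*b - zz))
      - (2*I/s)*(1 - I*s*b)*(I/s+δ*b-zz)
      - (2*I/s)*(b - (3*I*s/2)*b^2) - (2*r*lam/s))
    + (zz' - (zz^2 - 2*(δ-1)*b*zz + (1-2*r*s*lam)/s^2 - (4*I/s)*b
      + (δ+1)*(δ-3)*b^2 + δ*b')) = 0 := by
  field_simp
  ring_nf
  linear_combination (-1 + 2*δ*s^2*b^2 - 2*s^2*b*zz + 3*s^2*b^2 + 2*s*I*b) * Complex.I_sq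

theorem eigenvalue_equation_iff_riccati
    (s : ℝ) (hs : s ≠ 0) (δ lam : ℂ)
    (β Φ z Z Λ : ℝ → ℂ)
    (hβ : Differentiable ℝ β)
    (hΦ : ∀ x : ℝ, HasDerivAt Φ (β x) x)
    (hz : Differentiable ℝ z)
    (hZ : ∀ x : ℝ, HasDerivAt Z (z x) x)
    (hΛ : ∀ x : ℝ, Λ x = Complex.exp (I * x / s + δ * Φ x - Z x)) :
    (∀ x : ℝ,
      deriv (deriv Λ) x - (2 * I / s) * (1 - I * s * β x) * deriv Λ x
        - (2 * I / s) * (β x - (3 * I * s / 2) * β x ^ 2) * Λ x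
      = (2 * Real.sqrt 2 * lam / s) * Λ x) ↔
    (∀ x : ℝ,
      deriv z x = z x ^ 2 - 2 * (δ - 1) * β x * z x
        + (1 - 2 * Real.sqrt 2 * s * lam) / s ^ 2 - (4 * I / s) * β x
        + (δ + 1) * (δ - 3) * β x ^ 2 + δ * deriv β x) := by
  have hΛfun : Λ = fun y : ℝ => Complex.exp (I * y / s + δ * Φ y - Z y) := funext hΛ
  subst hΛfun
  set Λ : ℝ → ℂ := fun y : ℝ => Complex.exp (I * y / s + δ * Φ y - Z y) with hΛdef
  have hf : ∀ x : ℝ, HasDerivAt (fun y : ℝ => I * y / s + δ * Φ y - Z y)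
      (I / s + δ * β x - z x) x := by
    intro x
    have h1 : HasDerivAt (fun y : ℝ => I * (y : ℂ) / s) (I / s) x := by
      simpa using ((Complex.ofRealCLM.hasDerivAt (x := x)).const_mul I).div_const (s : ℂ)
    exact (h1.add ((hΦ x).const_mul δ)).sub (hZ x)
  have hΛd : ∀ x : ℝ, HasDerivAt Λ (Λ x * (I / s + δ * β x - z x)) x := fun x => (hf x).cexp
  have hd : deriv Λ = fun x => Λ x * (I / s + δ * β x - z x) :=
    funext fun x => (hΛd x).deriv
  have hw : ∀ x : ℝ, HasDerivAt (fun y : ℝ => I / (s : ℂ) + δ * β y - z y)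
      (δ * deriv β x - deriv z x) x := by
    intro x
    exact ((((hβ x).hasDerivAt.const_mul δ).const_add (I / (s:ℂ))).sub (hz x).hasDerivAt)
  have hdd : ∀ x : ℝ, deriv (deriv Λ) x
      = Λ x * (I / s + δ * β x - z x) * (I / s + δ * β x - z x)
        + Λ x * (δ * deriv β x - deriv z x) := by
    intro x
    rw [hd]
    exact ((hΛd x).mul (hw x)).deriv
  have hne : ∀ x : ℝ, Λ x ≠ 0 := fun x => Complex.exp_ne_zero _
  have hsC : (s : ℂ) ≠ 0 := Complex.ofReal_ne_zero.mpr hs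
  refine forall_congr' fun x => ?_
  rw [hdd x, hd]
  have key := riccati_key (s : ℂ) hsC δ (Real.sqrt 2 : ℂ) lam (β x) (deriv β x) (z x)
    (deriv z x)
  constructor
  · intro h
    have h2 : (((δ * deriv β x - deriv z x)
        + (I/s + δ*β x - z x)*(I/s + δ*β x - z x))
        - (2*I/s)*(1 - I*s*β x)*(I/s+δ*β x - z x)
        - (2*I/s)*(β x - (3*I*s/2)*β x^2) - (2*(Real.sqrt 2:ℂ)*lam/s)) * Λ x = 0 := by
      linear_combination h
    have h3 := (mul_eq_zero.mp h2).resolve_right (hne x)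
    linear_combination key - h3
  · intro h
    have h3 : (((δ * deriv β x - deriv z x)
        + (I/s + δ*β x - z x)*(I/s + δ*β x - z x))
        - (2*I/s)*(1 - I*s*β x)*(I/s+δ*β x - z x)
        - (2*I/s)*(β x - (3*I*s/2)*β x^2) - (2*(Real.sqrt 2:ℂ)*lam/s)) = 0 := by
      linear_combination key - h
    linear_combination (Λ x) * h3
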